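/- The generating series Σ_{m,n,p≥0} r_{m,n,p} s^m t^n u^p of 3D rook path counts equals (1-s)(1-t)(1-u) / (1 - 2(s+t+u) + 3(st+tu+us) - 4stu) as a formal power series in ℚ[[s,t,u]]. -/

import Mathlib

/-- A single 3D rook step: a positive integer multiple of a standard unit vector. -/
def IsRookStep (v : ℕ × ℕ × ℕ) : Prop :=
  ∃ m : ℕ, 0 < m ∧ (v = (m, 0, 0) ∨ v = (0, m, 0) ∨ v = (0, 0, m))

/-- The number of 3D rook paths from the origin to `(i,j,k)`. -/
noncomputable def rookCount (i j k : ℕ) : ℕ :=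
  Nat.card { l : List (ℕ × ℕ × ℕ) // (∀ s ∈ l, IsRookStep s) ∧ l.sum = (i, j, k) }

/-- The generating series `Σ r_{m,n,p} s^m t^n u^p` of 3D rook path counts. -/
noncomputable def rookSeries : MvPowerSeries (Fin 3) ℚ :=
  fun d => (rookCount (d 0) (d 1) (d 2) : ℚ)

namespace RookAux

open Finsupp Finset MvPowerSeries

abbrev Tri := ℕ × ℕ × ℕ

/-- The type of rook paths to `d`. -/
def T (d : Tri) : Type := { l : List Tri // (∀ s ∈ l, IsRookStep s) ∧ l.sum = d }

/-- Total weight of a triple, as an additive hom. -/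
def w : Tri →+ ℕ where
  toFun v := v.1 + v.2.1 + v.2.2
  map_zero' := rfl
  map_add' a b := by
    simp only [Prod.fst_add, Prod.snd_add]
    ring

lemma one_le_w {v : Tri} (h : IsRookStep v) : 1 ≤ w v := by
  obtain ⟨m, hm, (rfl | rfl | rfl)⟩ := h <;> simp [w] <;> omega

lemma step_ne_zero {v : Tri} (h : IsRookStep v) : v ≠ 0 := by
  obtain ⟨m, hm, (rfl | rfl | rfl)⟩ := h <;>
    simp [Prod.ext_iff] <;> omega

lemma mem_le_sum {l : List Tri} {v : Tri} (hv : v ∈ l) : v ≤ l.sum :=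
  List.single_le_sum (fun x _ => zero_le) v hv

lemma length_le_w {l : List Tri} (h : ∀ s ∈ l, IsRookStep s) :
    l.length ≤ w l.sum := by
  rw [map_list_sum]
  calc l.length = (l.map w).length := (List.length_map _).symm
    _ ≤ (l.map w).sum := List.length_le_sum_of_one_le _ (by
        intro x hx
        obtain ⟨v, hv, rfl⟩ := List.mem_map.mp hx
        exact one_le_w (h v hv))

instance T_finite (d : Tri) : Finite (T d) := by
  haveI : Finite (Set.Iic d) := (Set.finite_Iic d).to_subtype
  haveI : Finite {l : List (Set.Iic d) // l.length ≤ w d} := by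
    have := List.finite_length_le (α := (Set.Iic d)) (w d)
    exact this.to_subtype
  apply Finite.of_injective
    (f := fun x : T d => (⟨x.val.pmap (fun v h => (⟨v, h⟩ : Set.Iic d))
      (fun v hv => le_trans (mem_le_sum hv) (le_of_eq x.prop.2)),
      by
        refine List.length_pmap.trans_le ?_
        exact le_of_le_of_eq (length_le_w x.prop.1) (congrArg w x.prop.2)⟩ :
        {l : List (Set.Iic d) // l.length ≤ w d}))
  intro x y hxy
  apply Subtype.ext
  have := congrArg (fun z => (Subtype.val z).map Subtype.val) hxy
  have key : ∀ (l : List Tri) (H : ∀ v ∈ l, v ∈ Set.Iic d),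
      List.map Subtype.val (List.pmap (fun v h => (⟨v, h⟩ : Set.Iic d)) l H) = l := by
    intro l H
    rw [List.map_pmap, List.pmap_eq_map, List.map_id']
  exact (key _ _).symm.trans (this.trans (key _ _))

lemma rookCount_eq (d : Tri) : rookCount d.1 d.2.1 d.2.2 = Nat.card (T d) := rfl

lemma card_T_zero : Nat.card (T 0) = 1 := by
  haveI : Unique (T 0) := by
    refine ⟨⟨⟨[], by simp, rfl⟩⟩, ?_⟩
    rintro ⟨l, hl, hs⟩
    apply Subtype.ext
    match l, hl, hs with
    | [], _, _ => rfl
    | v :: t, hl, hs =>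
      exfalso
      have hv : v ≤ (v :: t).sum := mem_le_sum (List.mem_cons_self)
      rw [hs] at hv
      exact step_ne_zero (hl v (List.mem_cons_self)) (le_antisymm hv zero_le)
  exact Nat.card_unique

/-- Translation from exponents to triples. -/
def e (d : Fin 3 →₀ ℕ) : Tri := (d 0, d 1, d 2)

lemma e_add (a b : Fin 3 →₀ ℕ) : e (a + b) = e a + e b := by
  simp [e, Prod.ext_iff]

lemma e_inj : Function.Injective e := by
  intro a b h
  simp only [e, Prod.ext_iff] at h
  ext i
  fin_cases i <;> tauto

lemma e_zero : e 0 = 0 := rfl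

/-- Exponents of a single rook step. -/
def RookF (a : Fin 3 →₀ ℕ) : Prop := a ≠ 0 ∧ ∃ i, a = Finsupp.single i (a i)

lemma exists_rookF {v : Tri} (h : IsRookStep v) : ∃ a, RookF a ∧ e a = v := by
  obtain ⟨m, hm, (rfl | rfl | rfl)⟩ := h
  · exact ⟨Finsupp.single 0 m, ⟨by simp [Finsupp.single_eq_zero]; omega, 0, by simp⟩,
      by simp [e, Finsupp.single_apply]⟩
  · exact ⟨Finsupp.single 1 m, ⟨by simp [Finsupp.single_eq_zero]; omega, 1, by simp⟩,
      by simp [e, Finsupp.single_apply]⟩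
  · exact ⟨Finsupp.single 2 m, ⟨by simp [Finsupp.single_eq_zero]; omega, 2, by simp⟩,
      by simp [e, Finsupp.single_apply]⟩

lemma isRookStep_of_rookF {a : Fin 3 →₀ ℕ} (h : RookF a) : IsRookStep (e a) := by
  obtain ⟨hne, i, hi⟩ := h
  have hai : 0 < a i := by
    rcases Nat.eq_zero_or_pos (a i) with h0 | h0
    · exact absurd (by rw [hi, h0, Finsupp.single_zero]) hne
    · exact h0
  refine ⟨a i, hai, ?_⟩
  fin_cases i
  · left; rw [hi]; simp [e, Finsupp.single_apply]
  · right; left; rw [hi]; simp [e, Finsupp.single_apply]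
  · right; right; rw [hi]; simp [e, Finsupp.single_apply]

open Classical in
lemma card_rec (d : Fin 3 →₀ ℕ) (hd : d ≠ 0) :
    Nat.card (T (e d)) =
      ∑ p ∈ (Finset.HasAntidiagonal.antidiagonal d).filter (fun p => RookF p.1),
        Nat.card (T (e p.2)) := by
  classical
  set s := (Finset.HasAntidiagonal.antidiagonal d).filter (fun p => RookF p.1) with hs
  have hmem : ∀ p : s, (p : (Fin 3 →₀ ℕ) × (Fin 3 →₀ ℕ)).1 +
      (p : (Fin 3 →₀ ℕ) × (Fin 3 →₀ ℕ)).2 = d ∧ RookF (p : (Fin 3 →₀ ℕ) × (Fin 3 →₀ ℕ)).1 := by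
    rintro ⟨p, hp⟩
    rw [hs, Finset.mem_filter, Finset.HasAntidiagonal.mem_antidiagonal] at hp
    exact hp
  let F : (Σ p : s, T (e (p : (Fin 3 →₀ ℕ) × (Fin 3 →₀ ℕ)).2)) → T (e d) := fun x =>
    ⟨e (x.1 : (Fin 3 →₀ ℕ) × (Fin 3 →₀ ℕ)).1 :: x.2.val, by
      constructor
      · intro v hv
        rcases List.mem_cons.mp hv with rfl | hv
        · exact isRookStep_of_rookF (hmem x.1).2
        · exact x.2.prop.1 v hv
      · rw [List.sum_cons, x.2.prop.2, ← e_add, (hmem x.1).1]⟩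
  have hF : Function.Bijective F := by
    constructor
    · rintro ⟨⟨⟨a, b⟩, hp⟩, ⟨t, ht⟩⟩ ⟨⟨⟨a', b'⟩, hp'⟩, ⟨t', ht'⟩⟩ h
      have h' : e a :: t = e a' :: t' := congrArg Subtype.val h
      have h1 : a = a' := e_inj (List.head_eq_of_cons_eq h')
      have h2 : t = t' := List.tail_eq_of_cons_eq h'
      have hb : b = b' := by
        have e1 := (hmem ⟨(a, b), hp⟩).1
        have e2 := (hmem ⟨(a', b'), hp'⟩).1
        simp only at e1 e2
        rw [← h1] at e2
        exact add_left_cancel (e1.trans e2.symm)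
      subst h1; subst h2; subst hb
      rfl
    · rintro ⟨l, hl, hsum⟩
      match l, hl, hsum with
      | [], _, hsum =>
        exact absurd (e_inj (show e d = e 0 by rw [← hsum]; rfl)) hd
      | v :: t, hl, hsum =>
        obtain ⟨a, ha, hav⟩ := exists_rookF (hl v (List.mem_cons_self))
        obtain ⟨b, hb⟩ : ∃ b : Fin 3 →₀ ℕ, e b = t.sum := by
          refine ⟨Finsupp.single 0 (t.sum.1) + Finsupp.single 1 (t.sum.2.1) +
            Finsupp.single 2 (t.sum.2.2), ?_⟩
          simp [e, Finsupp.single_apply, Prod.ext_iff]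
        have habd : a + b = d := by
          apply e_inj
          rw [e_add, hav, hb]
          rw [← List.sum_cons, hsum]
        have hps : ((a, b) : (Fin 3 →₀ ℕ) × (Fin 3 →₀ ℕ)) ∈ s := by
          rw [hs, Finset.mem_filter, Finset.HasAntidiagonal.mem_antidiagonal]
          exact ⟨habd, ha⟩
        refine ⟨⟨⟨(a, b), hps⟩, ⟨t, fun u hu => hl u (List.mem_cons_of_mem _ hu), hb.symm⟩⟩, ?_⟩
        apply Subtype.ext
        show e a :: t = v :: t
        rw [hav]
  haveI : ∀ p : s, Fintype (T (e (p : (Fin 3 →₀ ℕ) × (Fin 3 →₀ ℕ)).2)) :=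
    fun _ => Fintype.ofFinite _
  rw [Nat.card_congr (Equiv.ofBijective F hF).symm]
  rw [Nat.card_eq_fintype_card, Fintype.card_sigma]
  rw [← Finset.sum_coe_sort s (fun p => Nat.card (T (e p.2)))]
  exact Finset.sum_congr rfl fun p _ => Nat.card_eq_fintype_card.symm

open Classical in
/-- The step series. -/
noncomputable def S : MvPowerSeries (Fin 3) ℚ := fun a => if RookF a then 1 else 0

open Classical in
/-- Geometric series in one variable. -/
noncomputable def g (i : Fin 3) : MvPowerSeries (Fin 3) ℚ :=
  fun a => if a = Finsupp.single i (a i) then 1 else 0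

open Classical in
lemma coeff_S (a : Fin 3 →₀ ℕ) :
    MvPowerSeries.coeff a S = if RookF a then 1 else 0 := rfl

open Classical in
lemma coeff_g (i : Fin 3) (a : Fin 3 →₀ ℕ) :
    MvPowerSeries.coeff a (g i) = if a = Finsupp.single i (a i) then 1 else 0 := rfl

open Classical in
lemma g_geom (i : Fin 3) : (1 - X i) * g i = 1 := by
  ext d
  rw [sub_mul, one_mul, map_sub, X_def, coeff_monomial_mul, coeff_one]
  simp only [coeff_g]
  by_cases hd : d = 0
  · subst hd
    rw [if_pos (by simp), if_neg (by
      intro h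
      have := Finsupp.le_def.mp h i
      simp at this), if_pos rfl]
    ring
  · rw [if_neg hd]
    by_cases h1 : d = Finsupp.single i (d i)
    · rw [if_pos h1]
      have hdi : 1 ≤ d i := by
        rcases Nat.eq_zero_or_pos (d i) with h0 | h0
        · exact absurd (by rw [h1, h0, Finsupp.single_zero]) hd
        · exact h0
      rw [if_pos (by rw [Finsupp.single_le_iff]; exact hdi)]
      rw [if_pos ?_]
      · ring
      · have hdj : ∀ j, j ≠ i → d j = 0 := by
          intro j hj
          rw [h1]
          simp [Finsupp.single_apply, Ne.symm hj]
        ext j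
        by_cases hj : j = i
        · subst hj
          simp [Finsupp.tsub_apply, Finsupp.single_apply]
        · simp [Finsupp.tsub_apply, Finsupp.single_apply, Ne.symm hj, hdj j hj]
    · rw [if_neg h1]
      by_cases h2 : Finsupp.single i 1 ≤ d
      · rw [if_pos h2]
        rw [if_neg ?_]
        · ring
        · intro hcon
          apply h1
          have h1le : 1 ≤ d i := by
            have := Finsupp.le_def.mp h2 i
            simpa using this
          set c : Fin 3 →₀ ℕ := d - Finsupp.single i 1 with hc
          have hv : c i = d i - 1 := by
            rw [hc, Finsupp.tsub_apply]
            simp [Finsupp.single_apply]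
          have key : d = Finsupp.single i 1 + c := by
            rw [hc, add_tsub_cancel_of_le h2]
          rw [hcon, hv, ← Finsupp.single_add] at key
          have hone : 1 + (d i - 1) = d i := by omega
          rw [hone] at key
          exact key
      · rw [if_neg h2]
        ring

lemma single_ne_of_rookF {d : Fin 3 →₀ ℕ} {i j : Fin 3}
    (hd : d ≠ 0) (hi : d = Finsupp.single i (d i)) (hij : j ≠ i) :
    d ≠ Finsupp.single j (d j) := by
  have hdj : d j = 0 := by
    rw [hi]
    simp [Finsupp.single_apply, Ne.symm hij]
  rw [hdj, Finsupp.single_zero]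
  exact hd

open Classical in
lemma S_eq : S = (g 0 - 1) + (g 1 - 1) + (g 2 - 1) := by
  ext d
  simp only [map_add, map_sub, coeff_g, coeff_S, coeff_one]
  by_cases hd : d = 0
  · subst hd
    have h0 : ¬RookF 0 := fun h => h.1 rfl
    rw [if_neg h0]
    simp
  · simp only [if_neg hd, sub_zero]
    by_cases hR : RookF d
    · rw [if_pos hR]
      obtain ⟨-, i, hi⟩ := hR
      fin_cases i
      · have hi' : d = Finsupp.single 0 (d 0) := hi
        rw [if_pos hi', if_neg (single_ne_of_rookF hd hi' (by decide)),
          if_neg (single_ne_of_rookF hd hi' (by decide))]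
        norm_num
      · have hi' : d = Finsupp.single 1 (d 1) := hi
        rw [if_neg (single_ne_of_rookF hd hi' (by decide)), if_pos hi',
          if_neg (single_ne_of_rookF hd hi' (by decide))]
        norm_num
      · have hi' : d = Finsupp.single 2 (d 2) := hi
        rw [if_neg (single_ne_of_rookF hd hi' (by decide)),
          if_neg (single_ne_of_rookF hd hi' (by decide)), if_pos hi']
        norm_num
    · have hall : ∀ i, d ≠ Finsupp.single i (d i) := fun i h => hR ⟨hd, i, h⟩
      rw [if_neg hR, if_neg (hall 0), if_neg (hall 1), if_neg (hall 2)]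
      norm_num

open Classical in
lemma rook_inv : rookSeries * (1 - S) = 1 := by
  have hr : ∀ b : Fin 3 →₀ ℕ,
      MvPowerSeries.coeff b rookSeries = (Nat.card (T (e b)) : ℚ) := fun _ => rfl
  have h : rookSeries = 1 + S * rookSeries := by
    ext d
    rw [map_add, coeff_one, MvPowerSeries.coeff_mul]
    by_cases hd : d = 0
    · subst hd
      rw [Finsupp.antidiagonal_zero, Finset.sum_singleton, coeff_S]
      have hnR : ¬ RookF ((0 : Fin 3 →₀ ℕ), (0 : Fin 3 →₀ ℕ)).1 := fun h => h.1 rfl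
      rw [if_neg hnR, if_pos rfl, zero_mul, add_zero, hr 0, e_zero, card_T_zero]
      norm_num
    · rw [if_neg hd, zero_add, hr d, card_rec d hd]
      simp only [coeff_S, ite_mul, one_mul, zero_mul, hr]
      rw [← Finset.sum_filter]
      push_cast
      rfl
  linear_combination h

end RookAux

open MvPowerSeries in
theorem rook_generating_series :
    rookSeries =
      ((1 - X 0) * (1 - X 1) * (1 - X 2)) *
        (1 - 2 * (X 0 + X 1 + X 2)
           + 3 * (X 0 * X 1 + X 1 * X 2 + X 2 * X 0)
           - 4 * (X 0 * X 1 * X 2) : MvPowerSeries (Fin 3) ℚ)⁻¹ := by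
  classical
  set N : MvPowerSeries (Fin 3) ℚ := (1 - X 0) * (1 - X 1) * (1 - X 2) with hN
  set D : MvPowerSeries (Fin 3) ℚ :=
    (1 - 2 * (X 0 + X 1 + X 2)
       + 3 * (X 0 * X 1 + X 1 * X 2 + X 2 * X 0)
       - 4 * (X 0 * X 1 * X 2)) with hD
  have h0 := RookAux.g_geom 0
  have h1 := RookAux.g_geom 1
  have h2 := RookAux.g_geom 2
  have hDN : (1 - RookAux.S) * N = D := by
    rw [RookAux.S_eq, hN, hD]
    linear_combination (-((1 - X 1) * (1 - X 2))) * h0 +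
      (-((1 - X 0) * (1 - X 2))) * h1 + (-((1 - X 0) * (1 - X 1))) * h2
  have hkey : rookSeries * D = N := by
    rw [← hDN]
    calc rookSeries * ((1 - RookAux.S) * N)
        = (rookSeries * (1 - RookAux.S)) * N := by ring
      _ = N := by rw [RookAux.rook_inv, one_mul]
  have hDne : MvPowerSeries.constantCoeff D ≠ 0 := by
    rw [hD]
    simp
  calc rookSeries = rookSeries * (D * D⁻¹) := by
        rw [MvPowerSeries.mul_inv_cancel _ hDne, mul_one]
    _ = (rookSeries * D) * D⁻¹ := by ring
    _ = N * D⁻¹ := by rw [hkey]
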